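/- Let B be a band, let x₁, …, xₙ ∈ B and let y ∈ B satisfy y·x_i·y = y for all i ∈ [1,n] (i.e. y lies 𝒥-below every x_i). Then in IG(B): x̄₁⋯x̄ₙ·ȳ = z̄₁ z̄₂ ⋯ z̄ₙ·ȳ, where z_k = x_k x_{k+1}⋯xₙ·y·xₙ⋯x_{k+1} x_k for k ∈ [1,n]; and dually ȳ·x̄₁⋯x̄ₙ = ȳ·w̄₁ w̄₂ ⋯ w̄ₙ, where w_k = x_k⋯x₁·y·x₁⋯x_k for k ∈ [1,n]. -/

import Mathlib

/-! Common definitions: free idempotent generated semigroups over bands,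
generalised Green's relations, and abundancy notions. -/

/-- `(e, f)` is a *basic pair* if `ef ∈ {e,f}` or `fe ∈ {e,f}`. -/
def basicPair {B : Type*} [Mul B] (e f : B) : Prop :=
  e * f = e ∨ e * f = f ∨ f * e = e ∨ f * e = f

/-- The defining congruence of the free idempotent generated semigroup `IG B`:
the congruence on the free semigroup on `{ē : e ∈ B}` generated by the relations
`ē f̄ = (ef)‾` for basic pairs `(e, f)`. -/
def igCon (B : Type*) [Semigroup B] : Con (FreeSemigroup B) :=
  conGen fun w₁ w₂ => ∃ e f : B, basicPair e f ∧
    w₁ = FreeSemigroup.of e * FreeSemigroup.of f ∧ w₂ = FreeSemigroup.of (e * f)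

/-- The free idempotent generated semigroup over a band `B`. -/
abbrev IG (B : Type*) [Semigroup B] := (igCon B).Quotient

/-- The canonical generator `ē` of `IG B`. -/
def igOf {B : Type*} [Semigroup B] (e : B) : IG B :=
  ((FreeSemigroup.of e : FreeSemigroup B) : (igCon B).Quotient)

/-- `prodSeq x a b = x a * x (a+1) * ⋯ * x b` (it is `x a` when `b ≤ a`). -/
def prodSeq {M : Type*} [Mul M] (x : ℕ → M) (a b : ℕ) : M :=
  (List.range (b - a)).foldl (fun acc i => acc * x (a + i + 1)) (x a)

/-- The word `x̄_a x̄_{a+1} ⋯ x̄_b` in the free semigroup on `{ē : e ∈ B}`. -/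
def freeWord {B : Type*} (x : ℕ → B) (a b : ℕ) : FreeSemigroup B :=
  prodSeq (fun i => FreeSemigroup.of (x i)) a b

/-- The element `x̄_a x̄_{a+1} ⋯ x̄_b` of `IG B`. -/
def igWord {B : Type*} [Semigroup B] (x : ℕ → B) (a b : ℕ) : IG B :=
  ((freeWord x a b : FreeSemigroup B) : (igCon B).Quotient)

/-- Green's relation `𝓡`: `a 𝓡 b` iff `a = b` or `as = b`, `bt = a` for some `s, t`. -/
def GreenR {S : Type*} [Semigroup S] (a b : S) : Prop :=
  a = b ∨ ∃ s t : S, a * s = b ∧ b * t = a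

/-- Green's relation `𝓛`: `a 𝓛 b` iff `a = b` or `sa = b`, `tb = a` for some `s, t`. -/
def GreenL {S : Type*} [Semigroup S] (a b : S) : Prop :=
  a = b ∨ ∃ s t : S, s * a = b ∧ t * b = a

/-- `a 𝓡* b` iff for all `x, y ∈ S¹`, `xa = ya ↔ xb = yb`. -/
def RStar {S : Type*} [Semigroup S] (a b : S) : Prop :=
  ∀ x y : WithOne S,
    x * (a : WithOne S) = y * (a : WithOne S) ↔ x * (b : WithOne S) = y * (b : WithOne S)

/-- `a 𝓛* b` iff for all `x, y ∈ S¹`, `ax = ay ↔ bx = by`. -/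
def LStar {S : Type*} [Semigroup S] (a b : S) : Prop :=
  ∀ x y : WithOne S,
    (a : WithOne S) * x = (a : WithOne S) * y ↔ (b : WithOne S) * x = (b : WithOne S) * y

/-- `a 𝓡̃ b` iff for every idempotent `e`, `ea = a ↔ eb = b`. -/
def RTilde {S : Type*} [Semigroup S] (a b : S) : Prop :=
  ∀ e : S, IsIdempotentElem e → (e * a = a ↔ e * b = b)

/-- `a 𝓛̃ b` iff for every idempotent `e`, `ae = a ↔ be = b`. -/
def LTilde {S : Type*} [Semigroup S] (a b : S) : Prop :=
  ∀ e : S, IsIdempotentElem e → (a * e = a ↔ b * e = b)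

/-- A semigroup is *abundant* if every `𝓡*`-class and every `𝓛*`-class
contains an idempotent. -/
def Abundant (S : Type*) [Semigroup S] : Prop :=
  ∀ a : S, (∃ e : S, IsIdempotentElem e ∧ RStar a e) ∧
    (∃ e : S, IsIdempotentElem e ∧ LStar a e)

/-- A semigroup is *weakly abundant* if every `𝓡̃`-class and every `𝓛̃`-class
contains an idempotent. -/
def WeaklyAbundant (S : Type*) [Semigroup S] : Prop :=
  ∀ a : S, (∃ e : S, IsIdempotentElem e ∧ RTilde a e) ∧
    (∃ e : S, IsIdempotentElem e ∧ LTilde a e)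

/-- On a band, `x` and `y` are `𝒟`-equivalent iff `xyx = x` and `yxy = y`. -/
def dEquiv {B : Type*} [Mul B] (x y : B) : Prop :=
  x * y * x = x ∧ y * x * y = y

/-- On a band, `x` and `y` are `𝒥`-incomparable iff `xyx ≠ x` and `yxy ≠ y`. -/
def jIncomp {B : Type*} [Mul B] (x y : B) : Prop :=
  x * y * x ≠ x ∧ y * x * y ≠ y

/-- One step of the reduction system induced by the presentation of `IG B`:
replace a factor `ē f̄`, with `(e,f)` a basic pair, by `(ef)‾`. -/
def RedStep {B : Type*} [Semigroup B] (w w' : FreeSemigroup B) : Prop :=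
  ∃ (p q : List B) (e f : B), basicPair e f ∧
    w.head :: w.tail = p ++ e :: f :: q ∧
    w'.head :: w'.tail = p ++ (e * f) :: q

/-- A word is in *normal form* (irreducible) if no reduction step applies. -/
def IsNF {B : Type*} [Semigroup B] (w : FreeSemigroup B) : Prop :=
  ∀ w', ¬ RedStep w w'

/-- `x̄₁ ⋯ x̄ₙ` (letters `x 1, …, x n`) is in *almost normal form* witnessed by
block boundaries `idx 0 = 0 < idx 1 < ⋯ < idx r = n`: within each block all
letters are `𝒟`-equivalent, and letters in adjacent blocks are incomparable. -/
def AlmostNF {B : Type*} [Mul B] (x : ℕ → B) (n r : ℕ) (idx : ℕ → ℕ) : Prop :=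
  1 ≤ r ∧ idx 0 = 0 ∧ idx r = n ∧
  (∀ k < r, idx k < idx (k + 1)) ∧
  (∀ k < r, ∀ p q : ℕ, idx k < p → p ≤ idx (k + 1) → idx k < q → q ≤ idx (k + 1) →
    dEquiv (x p) (x q)) ∧
  (∀ k : ℕ, k + 1 < r → ∀ p q : ℕ, idx k < p → p ≤ idx (k + 1) →
    idx (k + 1) < q → q ≤ idx (k + 2) → jIncomp (x p) (x q))

/-- Condition (P) for `IG B`. -/
def CondP (B : Type*) [Semigroup B] : Prop :=
  ∀ (n m r : ℕ) (u v : ℕ → B) (iu iv : ℕ → ℕ),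
    AlmostNF u n r iu → AlmostNF v m r iv →
    igWord u 1 n = igWord v 1 m →
    ((∀ s : ℕ, 1 ≤ s → s ≤ r →
        (u (iu s) * v (iv s) = u (iu s) ∧ v (iv s) * u (iu s) = v (iv s)) →
        igWord u 1 (iu s) = igWord v 1 (iv s)) ∧
      (∀ t : ℕ, t + 1 ≤ r →
        (u (iu t + 1) * v (iv t + 1) = v (iv t + 1) ∧
          v (iv t + 1) * u (iu t + 1) = u (iu t + 1)) →
        igWord u (iu t + 1) n = igWord v (iv t + 1) m))

/-- A normal band is *pliant* if for every `𝒟`-class `D` there is `c ∈ D` with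
`u e u = c` for every `e ∈ D` and every `u` strictly `𝒥`-above `D`. -/
def Pliant (B : Type*) [Mul B] : Prop :=
  ∀ d : B, ∃ c : B, dEquiv c d ∧
    ∀ e u : B, dEquiv e d → (e * u * e = e ∧ u * e * u ≠ u) → u * e * u = c


/-! ### Auxiliary lemmas -/

section ProdSeqAux

theorem prodSeq_of_le' {M : Type*} [Mul M] (f : ℕ → M) {a b : ℕ} (h : b ≤ a) :
    prodSeq f a b = f a := by
  unfold prodSeq
  rw [Nat.sub_eq_zero_of_le h, List.range_zero, List.foldl_nil]

theorem prodSeq_self' {M : Type*} [Mul M] (f : ℕ → M) (a : ℕ) : prodSeq f a a = f a :=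
  prodSeq_of_le' f le_rfl

theorem prodSeq_succ_right' {M : Type*} [Mul M] (f : ℕ → M) {a b : ℕ} (h : a ≤ b) :
    prodSeq f a (b + 1) = prodSeq f a b * f (b + 1) := by
  unfold prodSeq
  have h1 : b + 1 - a = (b - a) + 1 := by omega
  rw [h1, List.range_succ, List.foldl_append, List.foldl_cons, List.foldl_nil]
  have h2 : a + (b - a) + 1 = b + 1 := by omega
  rw [h2]

theorem prodSeq_succ_left' {M : Type*} [Semigroup M] (f : ℕ → M) {a b : ℕ} (h : a < b) :
    prodSeq f a b = f a * prodSeq f (a + 1) b := by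
  induction b with
  | zero => omega
  | succ b ih =>
    rcases Nat.lt_or_ge a b with hb | hb
    · rw [prodSeq_succ_right' f (by omega : a ≤ b), ih hb,
        prodSeq_succ_right' f (by omega : a + 1 ≤ b), mul_assoc]
    · have hab : a = b := by omega
      subst hab
      rw [prodSeq_succ_right' f le_rfl, prodSeq_self', prodSeq_self']

theorem prodSeq_congr' {M : Type*} [Mul M] {f g : ℕ → M} {a b : ℕ}
    (hab : a ≤ b) (h : ∀ i, a ≤ i → i ≤ b → f i = g i) :
    prodSeq f a b = prodSeq g a b := by
  induction b with
  | zero =>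
    have ha : a = 0 := by omega
    subst ha
    rw [prodSeq_self', prodSeq_self', h 0 le_rfl le_rfl]
  | succ b ih =>
    rcases le_or_gt a b with h1 | h1
    · rw [prodSeq_succ_right' f h1, prodSeq_succ_right' g h1,
        ih h1 (fun i h2 h3 => h i h2 (by omega)), h (b + 1) (by omega) le_rfl]
    · have ha : a = b + 1 := by omega
      subst ha
      rw [prodSeq_self', prodSeq_self', h _ le_rfl le_rfl]

theorem prodSeq_shift' {M : Type*} [Mul M] (f : ℕ → M) {a b : ℕ} (h : a ≤ b) :
    prodSeq (fun i => f (i + 1)) a b = prodSeq f (a + 1) (b + 1) := by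
  induction b with
  | zero =>
    have ha : a = 0 := by omega
    subst ha
    rw [prodSeq_self', prodSeq_self']
  | succ b ih =>
    rcases le_or_gt a b with h1 | h1
    · rw [prodSeq_succ_right' _ h1, prodSeq_succ_right' f (by omega : a + 1 ≤ b + 1), ih h1]
    · have ha : a = b + 1 := by omega
      subst ha
      rw [prodSeq_self', prodSeq_self']

theorem prodSeq_hom' {M N : Type*} [Mul M] [Mul N] (φ : M → N)
    (hφ : ∀ p q : M, φ (p * q) = φ p * φ q) (f : ℕ → M) (a b : ℕ) :
    φ (prodSeq f a b) = prodSeq (fun i => φ (f i)) a b := by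
  induction b with
  | zero => rw [prodSeq_of_le' f (Nat.zero_le a), prodSeq_of_le' _ (Nat.zero_le a)]
  | succ b ih =>
    rcases le_or_gt (b + 1) a with h1 | h1
    · rw [prodSeq_of_le' f h1, prodSeq_of_le' _ h1]
    · have hab : a ≤ b := by omega
      rw [prodSeq_succ_right' f hab, prodSeq_succ_right' _ hab, hφ, ih]

end ProdSeqAux

section IGAux

variable {B : Type*} [Semigroup B]

theorem igWord_eq_prodSeq (x : ℕ → B) (a b : ℕ) :
    igWord x a b = prodSeq (fun i => igOf (x i)) a b := by
  show ((freeWord x a b : FreeSemigroup B) : (igCon B).Quotient) = _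
  unfold freeWord
  exact prodSeq_hom' (fun w : FreeSemigroup B => (w : (igCon B).Quotient))
    (fun p q => Con.coe_mul p q) _ a b

theorem igOf_basic {e f : B} (h : basicPair e f) : igOf e * igOf f = igOf (e * f) := by
  show ((FreeSemigroup.of e : FreeSemigroup B) : (igCon B).Quotient) *
      ((FreeSemigroup.of f : FreeSemigroup B) : (igCon B).Quotient) =
      ((FreeSemigroup.of (e * f) : FreeSemigroup B) : (igCon B).Quotient)
  rw [← Con.coe_mul, Con.eq]
  exact ConGen.Rel.of _ _ ⟨e, f, h, rfl, rfl⟩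

theorem ig_Ra (hband : ∀ z : B, z * z = z) (t u : B) (h : u * t * u = u) :
    igOf t * igOf u = igOf (t * u * t) * igOf u := by
  have hb1 : basicPair (u * t) u := Or.inr (Or.inl h)
  have hb2 : basicPair t (u * t) := Or.inr (Or.inr (Or.inr (by rw [mul_assoc, hband t])))
  have h1 : igOf (u * t) * igOf u = igOf u := by rw [igOf_basic hb1, h]
  have h2 : igOf t * igOf (u * t) = igOf (t * (u * t)) := igOf_basic hb2
  calc igOf t * igOf u = igOf t * (igOf (u * t) * igOf u) := by rw [h1]
    _ = igOf t * igOf (u * t) * igOf u := by rw [mul_assoc]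
    _ = igOf (t * (u * t)) * igOf u := by rw [h2]
    _ = igOf (t * u * t) * igOf u := by rw [mul_assoc]

theorem ig_Rb (hband : ∀ z : B, z * z = z) (t u : B) (h : u * t * u = u) :
    igOf u * igOf t = igOf u * igOf (t * u * t) := by
  have hb1 : basicPair u (t * u) := Or.inl (by rw [← mul_assoc]; exact h)
  have hb2 : basicPair (t * u) t := Or.inr (Or.inr (Or.inl (by rw [← mul_assoc, hband t])))
  have h1 : igOf u * igOf (t * u) = igOf u := by
    rw [igOf_basic hb1, ← mul_assoc, h]
  have h2 : igOf (t * u) * igOf t = igOf (t * u * t) := igOf_basic hb2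
  calc igOf u * igOf t = igOf u * igOf (t * u) * igOf t := by rw [h1]
    _ = igOf u * (igOf (t * u) * igOf t) := by rw [mul_assoc]
    _ = igOf u * igOf (t * u * t) := by rw [h2]

theorem band_mid (hband : ∀ z : B, z * z = z) {y a b : B}
    (ha : y * a * y = y) (hb : y * b * y = y) : y * (a * b) * y = y := by
  calc y * (a * b) * y = y * b * y * (a * b) * (y * a * y) := by rw [ha, hb]
    _ = y * ((b * y * a) * (b * y * a)) * y := by simp only [mul_assoc]
    _ = y * (b * y * a) * y := by rw [hband (b * y * a)]
    _ = y * b * y * (a * y) := by simp only [mul_assoc]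
    _ = y * (a * y) := by rw [hb]
    _ = y := by rw [← mul_assoc, ha]

theorem band_mid_prod (hband : ∀ z : B, z * z = z) {y : B} (g : ℕ → B) {a b : ℕ}
    (hab : a ≤ b) (hg : ∀ i, a ≤ i → i ≤ b → y * g i * y = y) :
    y * prodSeq g a b * y = y := by
  induction b with
  | zero =>
    have ha : a = 0 := by omega
    subst ha
    rw [prodSeq_self']
    exact hg 0 le_rfl le_rfl
  | succ b ih =>
    rcases le_or_gt a b with h1 | h1
    · rw [prodSeq_succ_right' g h1]
      exact band_mid hband (ih h1 fun i hi hi' => hg i hi (by omega))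
        (hg (b + 1) (by omega) le_rfl)
    · have ha : a = b + 1 := by omega
      subst ha
      rw [prodSeq_self']
      exact hg _ le_rfl le_rfl

theorem cond_z (hband : ∀ z : B, z * z = z) {n : ℕ} (x : ℕ → B) (y : B)
    (hy : ∀ i : ℕ, 1 ≤ i → i ≤ n → y * x i * y = y) {k : ℕ} (h1 : 1 ≤ k) (h2 : k < n) :
    (prodSeq x (k + 1) n * y * prodSeq (fun i => x (n + (k + 1) - i)) (k + 1) n) * x k *
      (prodSeq x (k + 1) n * y * prodSeq (fun i => x (n + (k + 1) - i)) (k + 1) n) =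
    prodSeq x (k + 1) n * y * prodSeq (fun i => x (n + (k + 1) - i)) (k + 1) n := by
  set A := prodSeq x (k + 1) n with hA
  set C := prodSeq (fun i => x (n + (k + 1) - i)) (k + 1) n with hC
  have hyA : y * A * y = y :=
    band_mid_prod hband x (by omega : k + 1 ≤ n) (fun i hi hi' => hy i (by omega) hi')
  have hyC : y * C * y = y :=
    band_mid_prod hband _ (by omega : k + 1 ≤ n)
      (fun i hi hi' => hy (n + (k + 1) - i) (by omega) (by omega))
  have hyk : y * x k * y = y := hy k h1 (by omega)
  have hM : y * (C * (x k * A)) * y = y := band_mid hband hyC (band_mid hband hyk hyA)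
  calc A * y * C * x k * (A * y * C)
      = A * (y * (C * (x k * A)) * y) * C := by simp only [mul_assoc]
    _ = A * y * C := by rw [hM]

theorem z_rec {B : Type*} [Semigroup B] {n : ℕ} (x : ℕ → B) (y : B) {k : ℕ}
    (h1 : 1 ≤ k) (h2 : k < n) :
    x k * (prodSeq x (k + 1) n * y * prodSeq (fun i => x (n + (k + 1) - i)) (k + 1) n) * x k =
    prodSeq x k n * y * prodSeq (fun i => x (n + k - i)) k n := by
  have hP : prodSeq x k n = x k * prodSeq x (k + 1) n := prodSeq_succ_left' x h2
  have hQ : prodSeq (fun i => x (n + k - i)) k n =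
      prodSeq (fun i => x (n + (k + 1) - i)) (k + 1) n * x k := by
    obtain ⟨m, rfl⟩ : ∃ m, n = m + 1 := ⟨n - 1, by omega⟩
    have h4 := prodSeq_succ_right' (fun i => x (m + 1 + k - i)) (show k ≤ m by omega)
    rw [h4]
    have e1 : (fun i => x (m + 1 + k - i)) (m + 1) = x k := by
      show x (m + 1 + k - (m + 1)) = x k
      congr 1
      omega
    rw [show x (m + 1 + k - (m + 1)) = x k from e1]
    congr 1
    rw [← prodSeq_shift' (fun i => x (m + 1 + (k + 1) - i)) (show k ≤ m by omega)]
    exact prodSeq_congr' (show k ≤ m by omega)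
      (fun i hi hi' => by
        show x (m + 1 + k - i) = x (m + 1 + (k + 1) - (i + 1))
        congr 1
        omega)
  rw [hP, hQ]
  simp only [mul_assoc]

theorem cond_w (hband : ∀ z : B, z * z = z) {n : ℕ} (x : ℕ → B) (y : B)
    (hy : ∀ i : ℕ, 1 ≤ i → i ≤ n → y * x i * y = y) {k : ℕ} (h1 : 1 ≤ k) (h2 : k < n) :
    (prodSeq (fun i => x (k + 1 - i)) 1 k * y * prodSeq x 1 k) * x (k + 1) *
      (prodSeq (fun i => x (k + 1 - i)) 1 k * y * prodSeq x 1 k) =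
    prodSeq (fun i => x (k + 1 - i)) 1 k * y * prodSeq x 1 k := by
  set R := prodSeq (fun i => x (k + 1 - i)) 1 k with hR
  set P := prodSeq x 1 k with hP
  have hyR : y * R * y = y :=
    band_mid_prod hband _ h1 (fun i hi hi' => hy (k + 1 - i) (by omega) (by omega))
  have hyP : y * P * y = y :=
    band_mid_prod hband x h1 (fun i hi hi' => hy i hi (by omega))
  have hyk : y * x (k + 1) * y = y := hy (k + 1) (by omega) (by omega)
  have hM : y * (P * (x (k + 1) * R)) * y = y := band_mid hband hyP (band_mid hband hyk hyR)
  calc R * y * P * x (k + 1) * (R * y * P)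
      = R * (y * (P * (x (k + 1) * R)) * y) * P := by simp only [mul_assoc]
    _ = R * y * P := by rw [hM]

theorem w_rec {B : Type*} [Semigroup B] (x : ℕ → B) (y : B) {k : ℕ} (h1 : 1 ≤ k) :
    x (k + 1) * (prodSeq (fun i => x (k + 1 - i)) 1 k * y * prodSeq x 1 k) * x (k + 1) =
    prodSeq (fun i => x (k + 1 + 1 - i)) 1 (k + 1) * y * prodSeq x 1 (k + 1) := by
  have hP : prodSeq x 1 (k + 1) = prodSeq x 1 k * x (k + 1) := prodSeq_succ_right' x h1
  have hRr : prodSeq (fun i => x (k + 1 + 1 - i)) 1 (k + 1) =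
      x (k + 1) * prodSeq (fun i => x (k + 1 - i)) 1 k := by
    rw [prodSeq_succ_left' _ (by omega : 1 < k + 1)]
    congr 1
    rw [← prodSeq_shift' (fun i => x (k + 1 + 1 - i)) h1]
    exact prodSeq_congr' h1
      (fun i hi hi' => by
        show x (k + 1 + 1 - (i + 1)) = x (k + 1 - i)
        congr 1
        omega)
  rw [hP, hRr]
  simp only [mul_assoc]

theorem IG_first_half (hband : ∀ z : B, z * z = z) (n : ℕ) (x : ℕ → B) (y : B) (z : ℕ → B)
    (hbase : igOf (x n) * igOf y = igOf (z n) * igOf y)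
    (hrec : ∀ k, 1 ≤ k → k < n →
      igOf (x k) * igOf (z (k + 1)) = igOf (z k) * igOf (z (k + 1))) :
    ∀ d k : ℕ, k + d = n → 1 ≤ k →
      prodSeq (fun i => igOf (x i)) k n * igOf y =
        prodSeq (fun i => igOf (z i)) k n * igOf y := by
  intro d
  induction d with
  | zero =>
    intro k hk hk1
    have : k = n := by omega
    subst this
    rw [prodSeq_self', prodSeq_self']
    exact hbase
  | succ d ih =>
    intro k hk hk1
    have hkn : k < n := by omega
    have IH := ih (k + 1) (by omega) (by omega)
    have step : igOf (x k) * prodSeq (fun i => igOf (z i)) (k + 1) n =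
        igOf (z k) * prodSeq (fun i => igOf (z i)) (k + 1) n := by
      rcases Nat.lt_or_ge (k + 1) n with h2 | h2
      · rw [prodSeq_succ_left' (fun i => igOf (z i)) h2]
        show igOf (x k) * (igOf (z (k + 1)) * prodSeq (fun i => igOf (z i)) (k + 1 + 1) n) = _
        rw [← mul_assoc, ← mul_assoc, hrec k hk1 hkn]
      · rw [prodSeq_of_le' _ h2]
        show igOf (x k) * igOf (z (k + 1)) = igOf (z k) * igOf (z (k + 1))
        exact hrec k hk1 hkn
    calc prodSeq (fun i => igOf (x i)) k n * igOf y
        = igOf (x k) * prodSeq (fun i => igOf (x i)) (k + 1) n * igOf y := by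
          rw [prodSeq_succ_left' (fun i => igOf (x i)) hkn]
      _ = igOf (x k) * (prodSeq (fun i => igOf (x i)) (k + 1) n * igOf y) := by rw [mul_assoc]
      _ = igOf (x k) * (prodSeq (fun i => igOf (z i)) (k + 1) n * igOf y) := by rw [IH]
      _ = igOf (x k) * prodSeq (fun i => igOf (z i)) (k + 1) n * igOf y := by rw [← mul_assoc]
      _ = igOf (z k) * prodSeq (fun i => igOf (z i)) (k + 1) n * igOf y := by rw [step]
      _ = prodSeq (fun i => igOf (z i)) k n * igOf y := by
          rw [prodSeq_succ_left' (fun i => igOf (z i)) hkn]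

theorem IG_second_half (n : ℕ) (x w : ℕ → B) (y : B)
    (hbase : igOf y * igOf (x 1) = igOf y * igOf (w 1))
    (hrec : ∀ k, 1 ≤ k → k < n →
      igOf (w k) * igOf (x (k + 1)) = igOf (w k) * igOf (w (k + 1))) :
    ∀ k, 1 ≤ k → k ≤ n →
      igOf y * prodSeq (fun i => igOf (x i)) 1 k =
        igOf y * prodSeq (fun i => igOf (w i)) 1 k := by
  intro k
  induction k with
  | zero => omega
  | succ k ih =>
    intro hk1 hk2
    by_cases hk0 : k = 0
    · subst hk0
      rw [show (0 : ℕ) + 1 = 1 from rfl, prodSeq_self', prodSeq_self']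
      exact hbase
    · have h1 : 1 ≤ k := by omega
      have IH := ih h1 (by omega)
      have hr := hrec k h1 (by omega)
      have step : prodSeq (fun i => igOf (w i)) 1 k * igOf (x (k + 1)) =
          prodSeq (fun i => igOf (w i)) 1 k * igOf (w (k + 1)) := by
        rcases Nat.lt_or_ge 1 k with h3 | h3
        · obtain ⟨m, rfl⟩ : ∃ m, k = m + 1 := ⟨k - 1, by omega⟩
          rw [prodSeq_succ_right' (fun i => igOf (w i)) (by omega : 1 ≤ m)]
          show prodSeq (fun i => igOf (w i)) 1 m * igOf (w (m + 1)) * igOf (x (m + 1 + 1)) = _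
          rw [mul_assoc, mul_assoc, hr]
        · have hke : k = 1 := by omega
          subst hke
          rw [prodSeq_self']
          show igOf (w 1) * igOf (x (1 + 1)) = igOf (w 1) * igOf (w (1 + 1))
          exact hr
      calc igOf y * prodSeq (fun i => igOf (x i)) 1 (k + 1)
          = igOf y * (prodSeq (fun i => igOf (x i)) 1 k * igOf (x (k + 1))) := by
            rw [prodSeq_succ_right' (fun i => igOf (x i)) h1]
        _ = igOf y * prodSeq (fun i => igOf (x i)) 1 k * igOf (x (k + 1)) := by
            rw [← mul_assoc]
        _ = igOf y * prodSeq (fun i => igOf (w i)) 1 k * igOf (x (k + 1)) := by rw [IH]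
        _ = igOf y * (prodSeq (fun i => igOf (w i)) 1 k * igOf (x (k + 1))) := by
            rw [mul_assoc]
        _ = igOf y * (prodSeq (fun i => igOf (w i)) 1 k * igOf (w (k + 1))) := by rw [step]
        _ = igOf y * prodSeq (fun i => igOf (w i)) 1 (k + 1) := by
            rw [prodSeq_succ_right' (fun i => igOf (w i)) h1]

end IGAux

/-- Let `B` be a band, `x₁, …, xₙ ∈ B` and `y ∈ B` with
`y xᵢ y = y` for all `i ∈ [1,n]`. Then in `IG B`:
`x̄₁ ⋯ x̄ₙ ȳ = z̄₁ ⋯ z̄ₙ ȳ` where `z_k = (x_k ⋯ xₙ) y (xₙ ⋯ x_k)`, and dually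
`ȳ x̄₁ ⋯ x̄ₙ = ȳ w̄₁ ⋯ w̄ₙ` where `w_k = (x_k ⋯ x₁) y (x₁ ⋯ x_k)`. -/
theorem IG_band_push_down
    {B : Type*} [Semigroup B] (hband : ∀ x : B, x * x = x)
    (n : ℕ) (hn : 1 ≤ n) (x : ℕ → B) (y : B)
    (hy : ∀ i : ℕ, 1 ≤ i → i ≤ n → y * x i * y = y) :
    igWord x 1 n * igOf y =
      igWord (fun k => prodSeq x k n * y * prodSeq (fun i => x (n + k - i)) k n) 1 n
        * igOf y ∧
    igOf y * igWord x 1 n =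
      igOf y *
        igWord (fun k => prodSeq (fun i => x (k + 1 - i)) 1 k * y * prodSeq x 1 k) 1 n := by
  constructor
  · rw [igWord_eq_prodSeq, igWord_eq_prodSeq]
    have hbase1 : igOf (x n) * igOf y =
        igOf (prodSeq x n n * y * prodSeq (fun i => x (n + n - i)) n n) * igOf y := by
      have hzn : prodSeq x n n * y * prodSeq (fun i => x (n + n - i)) n n = x n * y * x n := by
        rw [prodSeq_self', prodSeq_self']
        have e : n + n - n = n := by omega
        show x n * y * x (n + n - n) = x n * y * x n
        rw [e]
      rw [hzn]
      exact ig_Ra hband (x n) y (hy n hn le_rfl)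
    refine IG_first_half hband n x y
      (fun k => prodSeq x k n * y * prodSeq (fun i => x (n + k - i)) k n)
      hbase1 ?_ (n - 1) 1 (by omega) le_rfl
    intro k h1 h2
    have hc := cond_z hband x y hy h1 h2
    have hr := ig_Ra hband (x k)
      (prodSeq x (k + 1) n * y * prodSeq (fun i => x (n + (k + 1) - i)) (k + 1) n) hc
    show igOf (x k) *
        igOf (prodSeq x (k + 1) n * y * prodSeq (fun i => x (n + (k + 1) - i)) (k + 1) n) =
      igOf (prodSeq x k n * y * prodSeq (fun i => x (n + k - i)) k n) *
        igOf (prodSeq x (k + 1) n * y * prodSeq (fun i => x (n + (k + 1) - i)) (k + 1) n)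
    rw [hr, z_rec x y h1 h2]
  · rw [igWord_eq_prodSeq, igWord_eq_prodSeq]
    have hbase2 : igOf y * igOf (x 1) =
        igOf y * igOf (prodSeq (fun i => x (1 + 1 - i)) 1 1 * y * prodSeq x 1 1) := by
      have hw1 : prodSeq (fun i => x (1 + 1 - i)) 1 1 * y * prodSeq x 1 1 = x 1 * y * x 1 := by
        rw [prodSeq_self', prodSeq_self']
      rw [hw1]
      exact ig_Rb hband (x 1) y (hy 1 le_rfl hn)
    refine IG_second_half n x
      (fun k => prodSeq (fun i => x (k + 1 - i)) 1 k * y * prodSeq x 1 k) y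
      hbase2 ?_ n hn le_rfl
    intro k h1 h2
    have hc := cond_w hband x y hy h1 h2
    have hr := ig_Rb hband (x (k + 1))
      (prodSeq (fun i => x (k + 1 - i)) 1 k * y * prodSeq x 1 k) hc
    show igOf (prodSeq (fun i => x (k + 1 - i)) 1 k * y * prodSeq x 1 k) * igOf (x (k + 1)) =
      igOf (prodSeq (fun i => x (k + 1 - i)) 1 k * y * prodSeq x 1 k) *
        igOf (prodSeq (fun i => x (k + 1 + 1 - i)) 1 (k + 1) * y * prodSeq x 1 (k + 1))
    rw [hr, w_rec x y h1]
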